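/- arXiv:2006.10599 — 7 statements merged into one kernel-verified Lean document; each statement's English description precedes it below -/
import Mathlib

section
/- Let (X, μ) be a measure space, let p, q : X → ℝ be measurable functions with p(x) > 0 and q(x) > 0 for μ-almost every x, and suppose the functions x ↦ p(x)·log(p(x)/q(x)) and x ↦ q(x)·log(q(x)/p(x)) are μ-integrable. Then for every α ∈ [0,1], the skew-geometric Jensen–Shannon expression with reversed geometric mean satisfies the quadratic identity: (1−α)·∫ p(x)·log( p(x) / (p(x)^α · q(x)^(1−α)) ) dμ + α·∫ q(x)·log( q(x) / (p(x)^α · q(x)^(1−α)) ) dμ = (1−α)²·∫ p(x)·log(p(x)/q(x)) dμ + α²·∫ q(x)·log(q(x)/p(x)) dμ. -/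
open MeasureTheory Filter Set

theorem jsg_alpha_prime_quadratic_identity
    {X : Type*} [MeasurableSpace X] (μ : Measure X)
    (p q : X → ℝ) (hp : Measurable p) (hq : Measurable q)
    (hp0 : ∀ᵐ x ∂μ, 0 < p x) (hq0 : ∀ᵐ x ∂μ, 0 < q x)
    (hpq : Integrable (fun x => p x * Real.log (p x / q x)) μ)
    (hqp : Integrable (fun x => q x * Real.log (q x / p x)) μ) :
    ∀ α ∈ Set.Icc (0 : ℝ) 1,
      (1 - α) * ∫ x, p x * Real.log (p x / (p x ^ α * q x ^ (1 - α))) ∂μ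
        + α * ∫ x, q x * Real.log (q x / (p x ^ α * q x ^ (1 - α))) ∂μ
      = (1 - α) ^ 2 * ∫ x, p x * Real.log (p x / q x) ∂μ
        + α ^ 2 * ∫ x, q x * Real.log (q x / p x) ∂μ := by
  intro α hα
  have h1 : ∫ x, p x * Real.log (p x / (p x ^ α * q x ^ (1 - α))) ∂μ
      = (1 - α) * ∫ x, p x * Real.log (p x / q x) ∂μ := by
    rw [← integral_const_mul]
    apply integral_congr_ae
    filter_upwards [hp0, hq0] with x hpx hqx
    have hlog : Real.log (p x / (p x ^ α * q x ^ (1 - α)))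
        = (1 - α) * Real.log (p x / q x) := by
      rw [Real.log_div hpx.ne' (by positivity), Real.log_mul (by positivity) (by positivity),
        Real.log_rpow hpx, Real.log_rpow hqx, Real.log_div hpx.ne' hqx.ne']
      ring
    rw [hlog]; ring
  have h2 : ∫ x, q x * Real.log (q x / (p x ^ α * q x ^ (1 - α))) ∂μ
      = α * ∫ x, q x * Real.log (q x / p x) ∂μ := by
    rw [← integral_const_mul]
    apply integral_congr_ae
    filter_upwards [hp0, hq0] with x hpx hqx
    have hlog : Real.log (q x / (p x ^ α * q x ^ (1 - α)))
        = α * Real.log (q x / p x) := by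
      rw [Real.log_div hqx.ne' (by positivity), Real.log_mul (by positivity) (by positivity),
        Real.log_rpow hpx, Real.log_rpow hqx, Real.log_div hqx.ne' hpx.ne']
      ring
    rw [hlog]; ring
  rw [h1, h2]; ring
end

section
/- Let (X, μ) be a measure space, let p, q : X → ℝ be measurable functions with p(x) > 0 and q(x) > 0 for μ-almost every x, and suppose x ↦ p(x)·log(p(x)/q(x)) and x ↦ q(x)·log(q(x)/p(x)) are μ-integrable. Then the function α ↦ (1−α)·∫ p·log( p / (p^α · q^(1−α)) ) dμ + α·∫ q·log( q / (p^α · q^(1−α)) ) dμ tends to ∫ p·log(p/q) dμ = KL(p ∥ q) as α → 0 within (0,1). -/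
open MeasureTheory Filter Set Topology

theorem jsg_alpha_prime_tendsto_forward_KL
    {X : Type*} [MeasurableSpace X] (μ : Measure X)
    (p q : X → ℝ) (hp : Measurable p) (hq : Measurable q)
    (hp0 : ∀ᵐ x ∂μ, 0 < p x) (hq0 : ∀ᵐ x ∂μ, 0 < q x)
    (hpq : Integrable (fun x => p x * Real.log (p x / q x)) μ)
    (hqp : Integrable (fun x => q x * Real.log (q x / p x)) μ) :
    Tendsto (fun α : ℝ =>
        (1 - α) * ∫ x, p x * Real.log (p x / (p x ^ α * q x ^ (1 - α))) ∂μ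
          + α * ∫ x, q x * Real.log (q x / (p x ^ α * q x ^ (1 - α))) ∂μ)
      (𝓝[Set.Ioo (0 : ℝ) 1] 0)
      (𝓝 (∫ x, p x * Real.log (p x / q x) ∂μ)) := by
  set A := ∫ x, p x * Real.log (p x / q x) ∂μ with hA
  set B := ∫ x, q x * Real.log (q x / p x) ∂μ with hB
  have key : ∀ α : ℝ,
      ((1 - α) * ∫ x, p x * Real.log (p x / (p x ^ α * q x ^ (1 - α))) ∂μ
        + α * ∫ x, q x * Real.log (q x / (p x ^ α * q x ^ (1 - α))) ∂μ)
      = (1 - α) * ((1 - α) * A) + α * (α * B) := by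
    intro α
    have h1 : (∫ x, p x * Real.log (p x / (p x ^ α * q x ^ (1 - α))) ∂μ)
        = (1 - α) * A := by
      rw [hA, ← integral_const_mul]
      refine integral_congr_ae ?_
      filter_upwards [hp0, hq0] with x hpx hqx
      have hratio : p x / (p x ^ α * q x ^ (1 - α)) = (p x / q x) ^ (1 - α) := by
        rw [Real.div_rpow hpx.le hqx.le]
        rw [show p x / (p x ^ α * q x ^ (1 - α)) = p x / p x ^ α / q x ^ (1 - α) by
          ring]
        congr 1
        rw [Real.rpow_sub hpx, Real.rpow_one]
      rw [hratio, Real.log_rpow (by positivity)]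
      ring
    have h2 : (∫ x, q x * Real.log (q x / (p x ^ α * q x ^ (1 - α))) ∂μ)
        = α * B := by
      rw [hB, ← integral_const_mul]
      refine integral_congr_ae ?_
      filter_upwards [hp0, hq0] with x hpx hqx
      have hratio : q x / (p x ^ α * q x ^ (1 - α)) = (q x / p x) ^ α := by
        rw [Real.div_rpow hqx.le hpx.le]
        rw [show q x / (p x ^ α * q x ^ (1 - α)) = q x / q x ^ (1 - α) / p x ^ α by
          ring]
        congr 1
        rw [div_eq_iff (by positivity), ← Real.rpow_add hqx]
        norm_num
      rw [hratio, Real.log_rpow (by positivity)]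
      ring
    rw [h1, h2]
  simp only [key]
  have hcont : Tendsto (fun α : ℝ => (1 - α) * ((1 - α) * A) + α * (α * B))
      (𝓝 0) (𝓝 A) := by
    have : Continuous (fun α : ℝ => (1 - α) * ((1 - α) * A) + α * (α * B)) := by
      continuity
    have h := this.tendsto 0
    simpa using h
  exact hcont.mono_left nhdsWithin_le_nhds
end

section
/- Let (X, μ) be a measure space, let p, q : X → ℝ be measurable functions with p(x) > 0 and q(x) > 0 for μ-almost every x, and suppose x ↦ p(x)·log(p(x)/q(x)) and x ↦ q(x)·log(q(x)/p(x)) are μ-integrable. Then the function α ↦ (1−α)·∫ p·log( p / (p^α · q^(1−α)) ) dμ + α·∫ q·log( q / (p^α · q^(1−α)) ) dμ tends to ∫ q·log(q/p) dμ = KL(q ∥ p) as α → 1 within (0,1). -/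
open MeasureTheory Filter Set Topology

theorem jsg_alpha_prime_tendsto_reverse_KL
    {X : Type*} [MeasurableSpace X] (μ : Measure X)
    (p q : X → ℝ) (hp : Measurable p) (hq : Measurable q)
    (hp0 : ∀ᵐ x ∂μ, 0 < p x) (hq0 : ∀ᵐ x ∂μ, 0 < q x)
    (hpq : Integrable (fun x => p x * Real.log (p x / q x)) μ)
    (hqp : Integrable (fun x => q x * Real.log (q x / p x)) μ) :
    Tendsto (fun α : ℝ =>
        (1 - α) * ∫ x, p x * Real.log (p x / (p x ^ α * q x ^ (1 - α))) ∂μ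
          + α * ∫ x, q x * Real.log (q x / (p x ^ α * q x ^ (1 - α))) ∂μ)
      (𝓝[Set.Ioo (0 : ℝ) 1] 1)
      (𝓝 (∫ x, q x * Real.log (q x / p x) ∂μ)) := by
  set A := ∫ x, p x * Real.log (p x / q x) ∂μ with hA
  set B := ∫ x, q x * Real.log (q x / p x) ∂μ with hB
  have key : ∀ α : ℝ,
      (1 - α) * ∫ x, p x * Real.log (p x / (p x ^ α * q x ^ (1 - α))) ∂μ
        + α * ∫ x, q x * Real.log (q x / (p x ^ α * q x ^ (1 - α))) ∂μ
      = (1 - α) * ((1 - α) * A) + α * (α * B) := by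
    intro α
    have h1 : (∫ x, p x * Real.log (p x / (p x ^ α * q x ^ (1 - α))) ∂μ)
        = (1 - α) * A := by
      rw [hA, ← integral_const_mul]
      refine integral_congr_ae ?_
      filter_upwards [hp0, hq0] with x hpx hqx
      have hppos := Real.rpow_pos_of_pos hpx α
      have hqpos := Real.rpow_pos_of_pos hqx (1 - α)
      rw [Real.log_div hpx.ne' (mul_pos hppos hqpos).ne',
        Real.log_mul hppos.ne' hqpos.ne',
        Real.log_rpow hpx, Real.log_rpow hqx,
        Real.log_div hpx.ne' hqx.ne']
      ring
    have h2 : (∫ x, q x * Real.log (q x / (p x ^ α * q x ^ (1 - α))) ∂μ)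
        = α * B := by
      rw [hB, ← integral_const_mul]
      refine integral_congr_ae ?_
      filter_upwards [hp0, hq0] with x hpx hqx
      have hppos := Real.rpow_pos_of_pos hpx α
      have hqpos := Real.rpow_pos_of_pos hqx (1 - α)
      rw [Real.log_div hqx.ne' (mul_pos hppos hqpos).ne',
        Real.log_mul hppos.ne' hqpos.ne',
        Real.log_rpow hpx, Real.log_rpow hqx,
        Real.log_div hqx.ne' hpx.ne']
      ring
    rw [h1, h2]
  simp only [key]
  have hcont : Tendsto (fun α : ℝ => (1 - α) * ((1 - α) * A) + α * (α * B)) (𝓝 1)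
      (𝓝 ((1 - 1) * ((1 - 1) * A) + 1 * (1 * B))) :=
    (Continuous.tendsto (by fun_prop) 1)
  have := hcont.mono_left (nhdsWithin_le_nhds (s := Ioo (0:ℝ) 1))
  simpa using this
end

section
/- Let (X, μ) be a measure space, let p, q : X → ℝ be measurable functions with p(x) > 0 and q(x) > 0 for μ-almost every x, and suppose the function x ↦ (p(x) + q(x))·|log(p(x)/q(x))| is μ-integrable. Then the function α ↦ (1−α)·∫ p^α·q^(1−α)·log( (p^α·q^(1−α))/p ) dμ + α·∫ p^α·q^(1−α)·log( (p^α·q^(1−α))/q ) dμ tends to ∫ q·log(q/p) dμ = KL(q ∥ p) as α → 0 within (0,1). -/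
open MeasureTheory Filter Set Topology

theorem dual_jsg_alpha_prime_tendsto_reverse_KL
    {X : Type*} [MeasurableSpace X] (μ : Measure X)
    (p q : X → ℝ) (hp : Measurable p) (hq : Measurable q)
    (hp0 : ∀ᵐ x ∂μ, 0 < p x) (hq0 : ∀ᵐ x ∂μ, 0 < q x)
    (hInt : Integrable (fun x => (p x + q x) * |Real.log (p x / q x)|) μ) :
    Tendsto (fun α : ℝ =>
        (1 - α) * ∫ x, p x ^ α * q x ^ (1 - α) *
            Real.log ((p x ^ α * q x ^ (1 - α)) / p x) ∂μ
          + α * ∫ x, p x ^ α * q x ^ (1 - α) *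
            Real.log ((p x ^ α * q x ^ (1 - α)) / q x) ∂μ)
      (𝓝[Set.Ioo (0 : ℝ) 1] 0)
      (𝓝 (∫ x, q x * Real.log (q x / p x) ∂μ)) := by
  set L : X → ℝ := fun x => Real.log (p x / q x) with hLdef
  set g : ℝ → X → ℝ := fun α x => p x ^ α * q x ^ (1 - α) * L x with hgdef
  -- Step 1: rewrite the integrals
  have key : ∀ α : ℝ,
      (1 - α) * ∫ x, p x ^ α * q x ^ (1 - α) *
          Real.log ((p x ^ α * q x ^ (1 - α)) / p x) ∂μ
        + α * ∫ x, p x ^ α * q x ^ (1 - α) *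
          Real.log ((p x ^ α * q x ^ (1 - α)) / q x) ∂μ
      = (2 * α - 1) * ∫ x, g α x ∂μ := by
    intro α
    have h1 : ∫ x, p x ^ α * q x ^ (1 - α) *
        Real.log ((p x ^ α * q x ^ (1 - α)) / p x) ∂μ
        = (α - 1) * ∫ x, g α x ∂μ := by
      rw [← integral_const_mul]
      refine integral_congr_ae ?_
      filter_upwards [hp0, hq0] with x hx hy
      have hpα : (0:ℝ) < p x ^ α := Real.rpow_pos_of_pos hx _
      have hqα : (0:ℝ) < q x ^ (1 - α) := Real.rpow_pos_of_pos hy _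
      rw [Real.log_div (by positivity) hx.ne', Real.log_mul hpα.ne' hqα.ne',
        Real.log_rpow hx, Real.log_rpow hy]
      simp only [hgdef, hLdef, Real.log_div hx.ne' hy.ne']
      ring
    have h2 : ∫ x, p x ^ α * q x ^ (1 - α) *
        Real.log ((p x ^ α * q x ^ (1 - α)) / q x) ∂μ
        = α * ∫ x, g α x ∂μ := by
      rw [← integral_const_mul]
      refine integral_congr_ae ?_
      filter_upwards [hp0, hq0] with x hx hy
      have hpα : (0:ℝ) < p x ^ α := Real.rpow_pos_of_pos hx _
      have hqα : (0:ℝ) < q x ^ (1 - α) := Real.rpow_pos_of_pos hy _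
      rw [Real.log_div (by positivity) hy.ne', Real.log_mul hpα.ne' hqα.ne',
        Real.log_rpow hx, Real.log_rpow hy]
      simp only [hgdef, hLdef, Real.log_div hx.ne' hy.ne']
      ring
    rw [h1, h2]; ring
  -- Step 2: DCT
  have hDCT : Tendsto (fun α => ∫ x, g α x ∂μ) (𝓝[Set.Ioo (0:ℝ) 1] 0)
      (𝓝 (∫ x, q x * L x ∂μ)) := by
    refine tendsto_integral_filter_of_dominated_convergence
      (fun x => (p x + q x) * |L x|) ?_ ?_ hInt ?_
    · filter_upwards with α
      have hm : Measurable (fun x => Real.exp (Real.log (p x) * α) *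
          Real.exp (Real.log (q x) * (1 - α)) * L x) :=
        ((hp.log.mul measurable_const).exp.mul
          (hq.log.mul measurable_const).exp).mul (hp.div hq).log
      refine hm.aestronglyMeasurable.congr ?_
      filter_upwards [hp0, hq0] with x hx hy
      simp only [hgdef]
      rw [Real.rpow_def_of_pos hx, Real.rpow_def_of_pos hy]
    · filter_upwards [eventually_mem_nhdsWithin] with α hα
      filter_upwards [hp0, hq0] with x hx hy
      have hge : p x ^ α * q x ^ (1 - α) ≤ p x + q x := by
        calc p x ^ α * q x ^ (1 - α) ≤ α * p x + (1 - α) * q x :=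
              Real.geom_mean_le_arith_mean2_weighted hα.1.le
                (by linarith [hα.2]) hx.le hy.le (by ring)
          _ ≤ p x + q x := by nlinarith [hα.1, hα.2, hx, hy]
      have h0 : (0:ℝ) ≤ p x ^ α * q x ^ (1 - α) := by positivity
      rw [Real.norm_eq_abs, abs_mul, abs_of_nonneg h0]
      exact mul_le_mul_of_nonneg_right hge (abs_nonneg _)
    · filter_upwards [hp0, hq0] with x hx hy
      have h1 : Tendsto (fun α : ℝ => p x ^ α) (𝓝 0) (𝓝 1) := by
        have := (Real.continuousAt_const_rpow (b := (0:ℝ)) hx.ne').tendsto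
        simpa using this
      have h2 : Tendsto (fun α : ℝ => q x ^ (1 - α)) (𝓝 0) (𝓝 (q x)) := by
        have h3 : Tendsto (fun α : ℝ => (1 - α)) (𝓝 0) (𝓝 1) := by
          have : Tendsto (fun α : ℝ => (1 - α)) (𝓝 0) (𝓝 (1 - 0)) :=
            tendsto_const_nhds.sub tendsto_id
          simpa using this
        have := (Real.continuousAt_const_rpow (b := (1:ℝ)) hy.ne').tendsto.comp h3
        simpa [Real.rpow_one, Function.comp_def] using this
      have := (h1.mul h2).mul_const (L x)
      rw [one_mul] at this
      exact this.mono_left nhdsWithin_le_nhds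
  -- Step 3: combine
  have hcoef : Tendsto (fun α : ℝ => 2 * α - 1) (𝓝[Set.Ioo (0:ℝ) 1] 0) (𝓝 (-1)) := by
    have : Tendsto (fun α : ℝ => 2 * α - 1) (𝓝 0) (𝓝 (2 * 0 - 1)) :=
      ((tendsto_const_nhds.mul tendsto_id).sub tendsto_const_nhds)
    simpa using this.mono_left nhdsWithin_le_nhds
  have hmul := hcoef.mul hDCT
  have hfin : (-1 : ℝ) * ∫ x, q x * L x ∂μ = ∫ x, q x * Real.log (q x / p x) ∂μ := by
    rw [neg_one_mul, ← integral_neg]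
    refine integral_congr_ae ?_
    filter_upwards [hp0, hq0] with x hx hy
    simp only [hLdef, Real.log_div hx.ne' hy.ne', Real.log_div hy.ne' hx.ne']
    ring
  rw [hfin] at hmul
  exact hmul.congr (fun α => (key α).symm)
end

section
/- Let (X, μ) be a measure space, let p, q : X → ℝ be measurable functions with p(x) > 0 and q(x) > 0 for μ-almost every x, and suppose the function x ↦ (p(x) + q(x))·|log(p(x)/q(x))| is μ-integrable. Then the function α ↦ (1−α)·∫ p^α·q^(1−α)·log( (p^α·q^(1−α))/p ) dμ + α·∫ p^α·q^(1−α)·log( (p^α·q^(1−α))/q ) dμ tends to ∫ p·log(p/q) dμ = KL(p ∥ q) as α → 1 within (0,1). -/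
open MeasureTheory Filter Set Topology

theorem dual_jsg_alpha_prime_tendsto_forward_KL
    {X : Type*} [MeasurableSpace X] (μ : Measure X)
    (p q : X → ℝ) (hp : Measurable p) (hq : Measurable q)
    (hp0 : ∀ᵐ x ∂μ, 0 < p x) (hq0 : ∀ᵐ x ∂μ, 0 < q x)
    (hInt : Integrable (fun x => (p x + q x) * |Real.log (p x / q x)|) μ) :
    Tendsto (fun α : ℝ =>
        (1 - α) * ∫ x, p x ^ α * q x ^ (1 - α) *
            Real.log ((p x ^ α * q x ^ (1 - α)) / p x) ∂μ
          + α * ∫ x, p x ^ α * q x ^ (1 - α) *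
            Real.log ((p x ^ α * q x ^ (1 - α)) / q x) ∂μ)
      (𝓝[Set.Ioo (0 : ℝ) 1] 1)
      (𝓝 (∫ x, p x * Real.log (p x / q x) ∂μ)) := by
  set L : X → ℝ := fun x => Real.log (p x / q x) with hL
  set F : ℝ → ℝ := fun α => ∫ x, p x ^ α * q x ^ (1 - α) * L x ∂μ with hF
  have hFmeas : ∀ α : ℝ, AEStronglyMeasurable
      (fun x => p x ^ α * q x ^ (1 - α) * L x) μ := by
    intro α
    apply Measurable.aestronglyMeasurable
    measurability
  have hbound : ∀ᶠ α in 𝓝[Set.Ioo (0:ℝ) 1] (1:ℝ), ∀ᵐ x ∂μ,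
      ‖p x ^ α * q x ^ (1 - α) * L x‖ ≤ (p x + q x) * |L x| := by
    filter_upwards [self_mem_nhdsWithin] with α hα
    filter_upwards [hp0, hq0] with x hpx hqx
    rw [Real.norm_eq_abs, abs_mul]
    have h1 : |p x ^ α * q x ^ (1 - α)| ≤ p x + q x := by
      rw [abs_of_nonneg (by positivity)]
      calc p x ^ α * q x ^ (1 - α)
          ≤ (p x + q x) ^ α * (p x + q x) ^ (1 - α) :=
            mul_le_mul
              (Real.rpow_le_rpow hpx.le (le_add_of_nonneg_right hqx.le) hα.1.le)
              (Real.rpow_le_rpow hqx.le (le_add_of_nonneg_left hpx.le)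
                (by linarith [hα.2]))
              (Real.rpow_nonneg hqx.le _) (Real.rpow_nonneg (by positivity) _)
        _ = p x + q x := by
            rw [← Real.rpow_add (by positivity)]; simp
    exact mul_le_mul_of_nonneg_right h1 (abs_nonneg _)
  have hlim : ∀ᵐ x ∂μ, Tendsto (fun α : ℝ => p x ^ α * q x ^ (1 - α) * L x)
      (𝓝[Set.Ioo (0:ℝ) 1] 1) (𝓝 (p x * L x)) := by
    filter_upwards [hp0, hq0] with x hpx hqx
    have hc : ContinuousAt (fun α : ℝ => p x ^ α * q x ^ (1 - α) * L x) 1 := by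
      apply ContinuousAt.mul _ continuousAt_const
      exact (Real.continuousAt_const_rpow hpx.ne').mul
        ((Real.continuousAt_const_rpow hqx.ne').comp
          (by fun_prop : ContinuousAt (fun α : ℝ => 1 - α) 1))
    have h := hc.tendsto.mono_left
      (nhdsWithin_le_nhds : 𝓝[Set.Ioo (0:ℝ) 1] 1 ≤ 𝓝 1)
    have : p x ^ (1:ℝ) * q x ^ (1 - (1:ℝ)) * L x = p x * L x := by
      rw [Real.rpow_one]; norm_num
    rwa [this] at h
  have hFt : Tendsto F (𝓝[Set.Ioo (0:ℝ) 1] 1) (𝓝 (∫ x, p x * L x ∂μ)) :=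
    tendsto_integral_filter_of_dominated_convergence _
      (Eventually.of_forall hFmeas) hbound hInt hlim
  have heq : ∀ α ∈ Set.Ioo (0:ℝ) 1,
      (1 - α) * ∫ x, p x ^ α * q x ^ (1 - α) *
            Real.log ((p x ^ α * q x ^ (1 - α)) / p x) ∂μ
          + α * ∫ x, p x ^ α * q x ^ (1 - α) *
            Real.log ((p x ^ α * q x ^ (1 - α)) / q x) ∂μ
        = (2 * α - 1) * F α := by
    intro α hα
    have e1 : ∫ x, p x ^ α * q x ^ (1 - α) *
        Real.log ((p x ^ α * q x ^ (1 - α)) / p x) ∂μ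
        = -(1 - α) * F α := by
      rw [hF]
      simp only
      rw [← integral_const_mul]
      apply integral_congr_ae
      filter_upwards [hp0, hq0] with x hpx hqx
      have h1 : p x ^ α ≠ 0 := (Real.rpow_pos_of_pos hpx α).ne'
      have h2 : q x ^ (1 - α) ≠ 0 := (Real.rpow_pos_of_pos hqx _).ne'
      rw [Real.log_div (mul_ne_zero h1 h2) hpx.ne', Real.log_mul h1 h2,
        Real.log_rpow hpx, Real.log_rpow hqx, hL]
      simp only
      rw [Real.log_div hpx.ne' hqx.ne']
      ring
    have e2 : ∫ x, p x ^ α * q x ^ (1 - α) *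
        Real.log ((p x ^ α * q x ^ (1 - α)) / q x) ∂μ
        = α * F α := by
      rw [hF]
      simp only
      rw [← integral_const_mul]
      apply integral_congr_ae
      filter_upwards [hp0, hq0] with x hpx hqx
      have h1 : p x ^ α ≠ 0 := (Real.rpow_pos_of_pos hpx α).ne'
      have h2 : q x ^ (1 - α) ≠ 0 := (Real.rpow_pos_of_pos hqx _).ne'
      rw [Real.log_div (mul_ne_zero h1 h2) hqx.ne', Real.log_mul h1 h2,
        Real.log_rpow hpx, Real.log_rpow hqx, hL]
      simp only
      rw [Real.log_div hpx.ne' hqx.ne']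
      ring
    rw [e1, e2]; ring
  have h2a : Tendsto (fun α : ℝ => (2 * α - 1) * F α) (𝓝[Set.Ioo (0:ℝ) 1] 1)
      (𝓝 (∫ x, p x * L x ∂μ)) := by
    have hc0 : ContinuousAt (fun α : ℝ => 2 * α - 1) 1 := by fun_prop
    have hc := hc0.tendsto.mono_left
      (nhdsWithin_le_nhds : 𝓝[Set.Ioo (0:ℝ) 1] 1 ≤ 𝓝 1)
    have h11 : (2*(1:ℝ)-1) = 1 := by norm_num
    rw [h11] at hc
    have := hc.mul hFt
    rwa [one_mul] at this
  exact Tendsto.congr' (eventuallyEq_of_mem self_mem_nhdsWithin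
    fun α hα => (heq α hα).symm) h2a
end

section
/- Let (X, μ) be a measure space, let p, q : X → ℝ be measurable functions with p(x) > 0 and q(x) > 0 for μ-almost every x, and suppose x ↦ p(x)·log(p(x)/q(x)) and x ↦ q(x)·log(q(x)/p(x)) are μ-integrable. Then for every α ∈ [0,1], the skew-geometric Jensen–Shannon expression with the original geometric mean G_α(p,q)(x) = p(x)^(1−α)·q(x)^α satisfies: (1−α)·∫ p·log( p / (p^(1−α)·q^α) ) dμ + α·∫ q·log( q / (p^(1−α)·q^α) ) dμ = α·(1−α)·( ∫ p·log(p/q) dμ + ∫ q·log(q/p) dμ ). -/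
open MeasureTheory Filter Set

theorem jsg_alpha_original_quadratic_identity
    {X : Type*} [MeasurableSpace X] (μ : Measure X)
    (p q : X → ℝ) (hp : Measurable p) (hq : Measurable q)
    (hp0 : ∀ᵐ x ∂μ, 0 < p x) (hq0 : ∀ᵐ x ∂μ, 0 < q x)
    (hpq : Integrable (fun x => p x * Real.log (p x / q x)) μ)
    (hqp : Integrable (fun x => q x * Real.log (q x / p x)) μ) :
    ∀ α ∈ Set.Icc (0 : ℝ) 1,
      (1 - α) * ∫ x, p x * Real.log (p x / (p x ^ (1 - α) * q x ^ α)) ∂μ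
        + α * ∫ x, q x * Real.log (q x / (p x ^ (1 - α) * q x ^ α)) ∂μ
      = α * (1 - α) * ((∫ x, p x * Real.log (p x / q x) ∂μ)
          + ∫ x, q x * Real.log (q x / p x) ∂μ) := by
  intro α hα
  have h1 : ∫ x, p x * Real.log (p x / (p x ^ (1 - α) * q x ^ α)) ∂μ
      = α * ∫ x, p x * Real.log (p x / q x) ∂μ := by
    rw [← integral_const_mul]
    apply integral_congr_ae
    filter_upwards [hp0, hq0] with x hpx hqx
    rw [Real.log_div hpx.ne' (by positivity),
        Real.log_mul (by positivity) (by positivity),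
        Real.log_rpow hpx, Real.log_rpow hqx,
        Real.log_div hpx.ne' hqx.ne']
    ring
  have h2 : ∫ x, q x * Real.log (q x / (p x ^ (1 - α) * q x ^ α)) ∂μ
      = (1 - α) * ∫ x, q x * Real.log (q x / p x) ∂μ := by
    rw [← integral_const_mul]
    apply integral_congr_ae
    filter_upwards [hp0, hq0] with x hpx hqx
    rw [Real.log_div hqx.ne' (by positivity),
        Real.log_mul (by positivity) (by positivity),
        Real.log_rpow hpx, Real.log_rpow hqx,
        Real.log_div hqx.ne' hpx.ne']
    ring
  rw [h1, h2]; ring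
end

section
/- Let (X, μ) be a measure space, let p, q : X → ℝ be measurable functions with p(x) > 0 and q(x) > 0 for μ-almost every x, and suppose x ↦ p(x)·log(p(x)/q(x)) and x ↦ q(x)·log(q(x)/p(x)) are μ-integrable. Then the function α ↦ (1−α)·∫ p·log( p / (p^(1−α)·q^α) ) dμ + α·∫ q·log( q / (p^(1−α)·q^α) ) dμ tends to 0 both as α → 0 within (0,1) and as α → 1 within (0,1). -/
open MeasureTheory Filter Set Topology

theorem jsg_alpha_original_tendsto_zero
    {X : Type*} [MeasurableSpace X] (μ : Measure X)
    (p q : X → ℝ) (hp : Measurable p) (hq : Measurable q)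
    (hp0 : ∀ᵐ x ∂μ, 0 < p x) (hq0 : ∀ᵐ x ∂μ, 0 < q x)
    (hpq : Integrable (fun x => p x * Real.log (p x / q x)) μ)
    (hqp : Integrable (fun x => q x * Real.log (q x / p x)) μ) :
    Tendsto (fun α : ℝ =>
        (1 - α) * ∫ x, p x * Real.log (p x / (p x ^ (1 - α) * q x ^ α)) ∂μ
          + α * ∫ x, q x * Real.log (q x / (p x ^ (1 - α) * q x ^ α)) ∂μ)
      (𝓝[Set.Ioo (0 : ℝ) 1] 0) (𝓝 0) ∧
    Tendsto (fun α : ℝ =>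
        (1 - α) * ∫ x, p x * Real.log (p x / (p x ^ (1 - α) * q x ^ α)) ∂μ
          + α * ∫ x, q x * Real.log (q x / (p x ^ (1 - α) * q x ^ α)) ∂μ)
      (𝓝[Set.Ioo (0 : ℝ) 1] 1) (𝓝 0) := by
  set A := ∫ x, p x * Real.log (p x / q x) ∂μ with hA
  set B := ∫ x, q x * Real.log (q x / p x) ∂μ with hB
  have h1 : ∀ α : ℝ, (∫ x, p x * Real.log (p x / (p x ^ (1 - α) * q x ^ α)) ∂μ)
      = α * A := by
    intro α
    rw [hA, ← integral_const_mul]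
    refine integral_congr_ae ?_
    filter_upwards [hp0, hq0] with x hpx hqx
    rw [Real.log_div (ne_of_gt hpx) (by positivity),
      Real.log_div (ne_of_gt hpx) (ne_of_gt hqx),
      Real.log_mul (by positivity) (by positivity),
      Real.log_rpow hpx, Real.log_rpow hqx]
    ring
  have h2 : ∀ α : ℝ, (∫ x, q x * Real.log (q x / (p x ^ (1 - α) * q x ^ α)) ∂μ)
      = (1 - α) * B := by
    intro α
    rw [hB, ← integral_const_mul]
    refine integral_congr_ae ?_
    filter_upwards [hp0, hq0] with x hpx hqx
    rw [Real.log_div (ne_of_gt hqx) (by positivity),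
      Real.log_div (ne_of_gt hqx) (ne_of_gt hpx),
      Real.log_mul (by positivity) (by positivity),
      Real.log_rpow hpx, Real.log_rpow hqx]
    ring
  have heq : (fun α : ℝ =>
      (1 - α) * ∫ x, p x * Real.log (p x / (p x ^ (1 - α) * q x ^ α)) ∂μ
        + α * ∫ x, q x * Real.log (q x / (p x ^ (1 - α) * q x ^ α)) ∂μ)
      = fun α : ℝ => (1 - α) * (α * A) + α * ((1 - α) * B) := by
    funext α; rw [h1, h2]
  rw [heq]
  have hc : Continuous fun α : ℝ => (1 - α) * (α * A) + α * ((1 - α) * B) := by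
    continuity
  constructor
  · have := (hc.tendsto 0).mono_left (nhdsWithin_le_nhds (s := Set.Ioo (0:ℝ) 1))
    simpa using this
  · have := (hc.tendsto 1).mono_left (nhdsWithin_le_nhds (s := Set.Ioo (0:ℝ) 1))
    simpa using this
end
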